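/- Let $\alpha > 0$, $\gamma \in (1, \alpha+1)$, and set $\phi'(z) = \frac{1}{(1-z)\log^\gamma(\frac{e}{1-z})}$ for $z$ in the unit disc. Then $\phi'$ belongs to the Hardy space $H^1$, i.e., $\sup_{0\leq r<1}\frac{1}{2\pi}\int_0^{2\pi}|\phi'(re^{i\theta})|\,d\theta < \infty$. -/

import Mathlib

open Complex Real

-- L1: monotonicity of denominator
lemma denom_mono {γ : ℝ} (hγ : 1 < γ) {s t : ℝ} (hs : 0 < s) (hst : s ≤ t) (ht : t ≤ 2) :
    s * (γ + Real.log 2 - Real.log s) ^ γ ≤ t * (γ + Real.log 2 - Real.log t) ^ γ := by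
  set c : ℝ := γ + Real.log 2 with hc
  have hbase : ∀ x : ℝ, 0 < x → x ≤ 2 → γ ≤ c - Real.log x := by
    intro x hx hx2
    have := Real.log_le_log hx hx2
    simp only [hc]; linarith
  have key : ∀ x ∈ Set.Ioo s t, HasDerivAt (fun x => x * (c - Real.log x) ^ γ)
      ((c - Real.log x) ^ (γ - 1) * (c - Real.log x - γ)) x := by
    intro x hx
    have hx0 : 0 < x := hs.trans hx.1
    have hx2 : x ≤ 2 := hx.2.le.trans ht
    have hb : 0 < c - Real.log x := lt_of_lt_of_le (by linarith) (hbase x hx0 hx2)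
    have h1 : HasDerivAt (fun x : ℝ => c - Real.log x) (-x⁻¹) x :=
      (Real.hasDerivAt_log hx0.ne').const_sub c
    have h2 : HasDerivAt (fun x : ℝ => (c - Real.log x) ^ γ)
        (-x⁻¹ * γ * (c - Real.log x) ^ (γ - 1)) x := h1.rpow_const (Or.inl hb.ne')
    have h3 := (hasDerivAt_id x).mul h2
    refine h3.congr_deriv ?_
    symm
    have : (c - Real.log x) ^ γ = (c - Real.log x) ^ (γ - 1) * (c - Real.log x) := by
      rw [← Real.rpow_add_one hb.ne']; ring_nf
    rw [this, id]
    field_simp [this]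
    ring
  rcases eq_or_lt_of_le hst with rfl | hlt
  · rfl
  have hmono : MonotoneOn (fun x => x * (c - Real.log x) ^ γ) (Set.Icc s t) := by
    apply monotoneOn_of_deriv_nonneg (convex_Icc s t)
    · apply ContinuousOn.mul continuousOn_id
      intro x hx
      have hx0 : 0 < x := lt_of_lt_of_le hs hx.1
      have hct : ContinuousAt (fun y : ℝ => (c - Real.log y) ^ γ) x :=
        ((Real.continuousAt_log hx0.ne').const_sub c).rpow_const (Or.inr (by linarith))
      exact hct.continuousWithinAt
    · intro x hx
      rw [interior_Icc] at hx
      exact ((key x hx).differentiableAt).differentiableWithinAt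
    · intro x hx
      rw [interior_Icc] at hx
      rw [(key x hx).deriv]
      have hx0 : 0 < x := hs.trans hx.1
      have hx2 : x ≤ 2 := hx.2.le.trans ht
      have h1 := hbase x hx0 hx2
      have hb : 0 < c - Real.log x := lt_of_lt_of_le (by linarith) h1
      have := Real.rpow_nonneg hb.le (γ - 1)
      nlinarith
  exact hmono (Set.left_mem_Icc.2 hst) (Set.right_mem_Icc.2 hst) hst

lemma log_two_lt_one : Real.log 2 < 1 :=
  lt_trans Real.log_two_lt_d9 (by norm_num)

-- L2: comparison
lemma compare_denoms {γ : ℝ} (hγ : 1 < γ) {t : ℝ} (ht : 0 < t) (ht2 : t ≤ 2) :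
    (t * (1 - Real.log t) ^ γ)⁻¹
      ≤ (1 + (γ + Real.log 2 - 1) / (1 - Real.log 2)) ^ γ
        * (t * (γ + Real.log 2 - Real.log t) ^ γ)⁻¹ := by
  set c : ℝ := γ + Real.log 2 with hc
  set d : ℝ := 1 - Real.log 2 with hd
  set B : ℝ := 1 + (c - 1) / d with hB
  have hd0 : 0 < d := by simp only [hd]; linarith [log_two_lt_one]
  have hlt : Real.log t ≤ Real.log 2 := Real.log_le_log ht ht2
  have h1t : 0 < 1 - Real.log t := by linarith
  have hct : 0 < c - Real.log t := by simp only [hc]; linarith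
  have hl2 : 0 < Real.log 2 := Real.log_pos (by norm_num)
  have hB1 : 1 ≤ B := by
    have : 0 ≤ (c - 1) / d := div_nonneg (by simp only [hc]; linarith) hd0.le
    simp only [hB]; linarith
  have hkey : c - Real.log t ≤ B * (1 - Real.log t) := by
    have h2 : (c - 1) / d * d ≤ (c - 1) / d * (1 - Real.log t) := by
      apply mul_le_mul_of_nonneg_left (by linarith)
        (div_nonneg (by simp only [hc]; linarith) hd0.le)
      
    rw [div_mul_cancel₀ _ hd0.ne'] at h2
    simp only [hB]; nlinarith
  have hrpow : (c - Real.log t) ^ γ ≤ B ^ γ * (1 - Real.log t) ^ γ := by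
    rw [← Real.mul_rpow (by linarith) h1t.le]
    exact Real.rpow_le_rpow hct.le hkey (by linarith)
  calc (t * (1 - Real.log t) ^ γ)⁻¹
      ≤ (t * (c - Real.log t) ^ γ / B ^ γ)⁻¹ := by
        apply inv_anti₀ (by positivity)
        rw [div_le_iff₀ (by positivity)]
        calc t * (c - Real.log t) ^ γ ≤ t * (B ^ γ * (1 - Real.log t) ^ γ) :=
              mul_le_mul_of_nonneg_left hrpow ht.le
          _ = t * (1 - Real.log t) ^ γ * B ^ γ := by ring
    _ = B ^ γ * (t * (c - Real.log t) ^ γ)⁻¹ := by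
        rw [div_eq_mul_inv, mul_inv, inv_inv]; ring

-- continuity helper for G ∘ h where h positive with c - log(h θ) > 0
lemma G_continuousAt {γ c t : ℝ} (ht : 0 < t) (htc : 0 < c - Real.log t) :
    ContinuousAt (fun s : ℝ => (s * (c - Real.log s) ^ γ)⁻¹) t := by
  apply ContinuousAt.inv₀
  · have hct : ContinuousAt (fun y : ℝ => (c - Real.log y) ^ γ) t :=
      ((Real.continuousAt_log ht.ne').const_sub c).rpow_const (Or.inl htc.ne')
    exact continuousAt_id.mul hct
  · have := Real.rpow_pos_of_pos htc γ
    positivity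

-- FTC lemma
lemma key_integral {γ : ℝ} (hγ : 1 < γ) {a : ℝ} (ha : 0 < a) (hab : a ≤ π) :
    ∫ θ in a..π, ((θ / π) * (γ + Real.log 2 - Real.log (θ / π)) ^ γ)⁻¹
      ≤ π * (γ - 1)⁻¹ := by
  set c : ℝ := γ + Real.log 2 with hc
  have hl2 : 0 < Real.log 2 := Real.log_pos (by norm_num)
  have hcγ : γ ≤ c := by simp only [hc]; linarith
  have hπ := Real.pi_pos
  have hbase : ∀ θ : ℝ, a ≤ θ → θ ≤ π → 0 < c - Real.log (θ / π) ∧ 0 < θ := by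
    intro θ h1 h2
    have hθ0 : 0 < θ := ha.trans_le h1
    have : θ / π ≤ 1 := (div_le_one hπ).2 h2
    have := Real.log_nonpos (by positivity) this
    exact ⟨by linarith, hθ0⟩
  have hderiv : ∀ θ ∈ Set.uIcc a π,
      HasDerivAt (fun θ : ℝ => π * (γ - 1)⁻¹ * (c - Real.log (θ / π)) ^ (1 - γ))
        (((θ / π) * (c - Real.log (θ / π)) ^ γ)⁻¹) θ := by
    intro θ hθ
    rw [Set.uIcc_of_le hab] at hθ
    obtain ⟨hcb, hθ0⟩ := hbase θ hθ.1 hθ.2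
    have h1 : HasDerivAt (fun θ : ℝ => c - Real.log (θ / π)) (-θ⁻¹) θ := by
      have hdiv : HasDerivAt (fun θ : ℝ => θ / π) (1 / π) θ := by
        simpa using (hasDerivAt_id θ).div_const π
      have := (hdiv.log (by positivity)).const_sub c
      refine this.congr_deriv ?_
      rw [div_div_div_cancel_right₀ hπ.ne', one_div]
    have h2 := (h1.rpow_const (p := 1 - γ) (Or.inl hcb.ne')).const_mul (π * (γ - 1)⁻¹)
    refine h2.congr_deriv ?_
    symm
    have hne : (c - Real.log (θ / π)) ^ γ ≠ 0 := (Real.rpow_pos_of_pos hcb γ).ne'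
    have hsplit : (c - Real.log (θ / π)) ^ (1 - γ - 1) = ((c - Real.log (θ / π)) ^ γ)⁻¹ := by
      rw [show (1 : ℝ) - γ - 1 = -γ by ring, Real.rpow_neg hcb.le]
    rw [hsplit]
    have hγne : γ - 1 ≠ 0 := sub_ne_zero.2 (by linarith)
    field_simp [hγne]
    ring
  have hint : IntervalIntegrable
      (fun θ : ℝ => ((θ / π) * (c - Real.log (θ / π)) ^ γ)⁻¹) MeasureTheory.volume a π := by
    apply ContinuousOn.intervalIntegrable
    intro θ hθ
    rw [Set.uIcc_of_le hab] at hθ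
    obtain ⟨hcb, hθ0⟩ := hbase θ hθ.1 hθ.2
    have hca : ContinuousAt (fun s : ℝ => (s * (c - Real.log s) ^ γ)⁻¹) (θ / π) :=
      G_continuousAt (by positivity) hcb
    have hdc : ContinuousAt (fun x : ℝ => x / π) θ := continuousAt_id.div_const π
    exact (ContinuousAt.comp (x := θ) (g := fun s : ℝ => (s * (c - Real.log s) ^ γ)⁻¹)
      (f := fun x : ℝ => x / π) hca hdc).continuousWithinAt
  rw [intervalIntegral.integral_eq_sub_of_hasDerivAt hderiv hint]
  have e1 : π / π = 1 := div_self hπ.ne'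
  have hF2 : (0:ℝ) ≤ π * (γ - 1)⁻¹ * (c - Real.log (a / π)) ^ (1 - γ) := by
    obtain ⟨hcb, _⟩ := hbase a le_rfl hab
    have h1 := Real.rpow_pos_of_pos hcb (1 - γ)
    have h2 : (0:ℝ) < (γ - 1)⁻¹ := inv_pos.2 (by linarith)
    positivity
  have hF1 : π * (γ - 1)⁻¹ * (c - Real.log (π / π)) ^ (1 - γ) ≤ π * (γ - 1)⁻¹ := by
    rw [e1, Real.log_one, sub_zero]
    have hc1 : 1 ≤ c := by linarith
    have := Real.rpow_le_one_of_one_le_of_nonpos hc1 (by linarith : 1 - γ ≤ 0)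
    calc π * (γ - 1)⁻¹ * c ^ (1 - γ) ≤ π * (γ - 1)⁻¹ * 1 := by
          exact mul_le_mul_of_nonneg_left this
            (mul_nonneg hπ.le (inv_nonneg.2 (by linarith)))
      _ = π * (γ - 1)⁻¹ := mul_one _
  linarith


lemma abs_z_eq {r θ : ℝ} (hr0 : 0 ≤ r) :
    ‖(r : ℂ) * Complex.exp (θ * Complex.I)‖ = r := by
  rw [norm_mul, Complex.norm_exp]
  simp [_root_.abs_of_nonneg hr0]

lemma re_w {r θ : ℝ} : (1 - (r : ℂ) * Complex.exp (θ * Complex.I)).re = 1 - r * Real.cos θ := by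
  simp [Complex.exp_ofReal_mul_I_re, Complex.mul_re, Complex.exp_ofReal_mul_I_im]

lemma im_w {r θ : ℝ} : (1 - (r : ℂ) * Complex.exp (θ * Complex.I)).im = -(r * Real.sin θ) := by
  simp [Complex.exp_ofReal_mul_I_re, Complex.mul_im, Complex.exp_ofReal_mul_I_im]

-- geometric lower bound
lemma geo_bound {r θ : ℝ} (hr0 : 0 ≤ r) (hr1 : r < 1) (hθ0 : 0 ≤ θ) (hθ2 : θ ≤ 2 * π) :
    min θ (2 * π - θ) / π ≤ ‖1 - (r : ℂ) * Complex.exp (θ * Complex.I)‖ := by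
  have hπ := Real.pi_pos
  set m : ℝ := min θ (2 * π - θ) with hm
  have hm0 : 0 ≤ m := le_min hθ0 (by linarith)
  have hmπ : m ≤ π := by
    rcases le_total θ π with h | h
    · exact le_trans (min_le_left _ _) h
    · exact le_trans (min_le_right _ _) (by linarith)
  by_cases hc : Real.cos θ ≤ 0
  · have h1 : (1:ℝ) ≤ (1 - (r:ℂ) * Complex.exp (θ * Complex.I)).re := by
      rw [re_w]
      nlinarith
    calc m / π ≤ 1 := (div_le_one hπ).2 hmπ
      _ ≤ _ := le_trans h1 (Complex.re_le_norm _)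
  · push_neg at hc
    have hmhalf : m ≤ π / 2 := by
      by_cases h1 : θ ≤ π / 2
      · exact le_trans (min_le_left _ _) h1
      · push_neg at h1
        by_cases h2 : θ ≤ π + π / 2
        · exact absurd (Real.cos_nonpos_of_pi_div_two_le_of_le h1.le h2) (not_le.2 hc)
        · push_neg at h2
          refine le_trans (min_le_right _ _) ?_
          linarith
    rcases le_total r (1/2) with hr | hr
    · have h3 : (1:ℝ) - r ≤ ‖1 - (r:ℂ) * Complex.exp (θ * Complex.I)‖ := by
        have := norm_sub_norm_le (1 : ℂ) ((r:ℂ) * Complex.exp (θ * Complex.I))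
        simpa [abs_z_eq hr0, _root_.abs_of_nonneg hr0] using this
      calc m / π ≤ (π/2) / π := div_le_div_of_nonneg_right hmhalf hπ.le |>.trans_eq rfl
        _ = 1/2 := by field_simp
        _ ≤ 1 - r := by linarith
        _ ≤ _ := h3
    · -- r ≥ 1/2 : use imaginary part
      have hsin : 2 / π * m ≤ |Real.sin θ| := by
        by_cases h1 : θ ≤ π / 2
        · have hmθ : m = θ := min_eq_left (by linarith)
          rw [hmθ]
          exact le_trans (Real.mul_le_sin hθ0 h1) (le_abs_self _)
        · push_neg at h1
          have h2 : π + π / 2 < θ := by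
            by_contra h2
            push_neg at h2
            exact absurd (Real.cos_nonpos_of_pi_div_two_le_of_le h1.le h2) (not_le.2 hc)
          have hmu : m = 2 * π - θ := min_eq_right (by linarith)
          have hu0 : 0 ≤ 2 * π - θ := by linarith
          have hu1 : 2 * π - θ ≤ π / 2 := by linarith
          have hs : Real.sin (2 * π - θ) = -Real.sin θ := Real.sin_two_pi_sub θ
          have := Real.mul_le_sin hu0 hu1
          rw [hs] at this
          rw [hmu]
          exact le_trans this (neg_le_abs _)
      have habs : r * |Real.sin θ| ≤ ‖1 - (r:ℂ) * Complex.exp (θ * Complex.I)‖ := by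
        have h4 := Complex.abs_im_le_norm (1 - (r:ℂ) * Complex.exp (θ * Complex.I))
        rw [im_w, abs_neg, abs_mul, _root_.abs_of_nonneg hr0] at h4
        exact h4
      calc m / π = (1/2) * (2 / π * m) := by field_simp
        _ ≤ (1/2) * |Real.sin θ| :=
            mul_le_mul_of_nonneg_left hsin (by norm_num)
        _ ≤ r * |Real.sin θ| := mul_le_mul_of_nonneg_right hr (abs_nonneg _)
        _ ≤ _ := habs

lemma w_lower {r θ : ℝ} (hr0 : 0 ≤ r) :
    1 - r ≤ ‖1 - (r : ℂ) * Complex.exp (θ * Complex.I)‖ := by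
  have := norm_sub_norm_le (1 : ℂ) ((r:ℂ) * Complex.exp (θ * Complex.I))
  simpa [abs_z_eq hr0, _root_.abs_of_nonneg hr0] using this

lemma w_upper {r θ : ℝ} (hr0 : 0 ≤ r) (hr1 : r < 1) :
    ‖1 - (r : ℂ) * Complex.exp (θ * Complex.I)‖ ≤ 2 := by
  have := norm_sub_le (1 : ℂ) ((r:ℂ) * Complex.exp (θ * Complex.I))
  rw [abs_z_eq hr0] at this
  simp only [norm_one] at this
  linarith

lemma log_re_val {w : ℂ} (hw : w ≠ 0) :
    (Complex.log ((Real.exp 1 : ℂ) / w)).re = 1 - Real.log (‖w‖) := by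
  rw [Complex.log_re, norm_div, Complex.norm_real, Real.norm_eq_abs, _root_.abs_of_nonneg (Real.exp_pos 1).le,
    Real.log_div (Real.exp_pos 1).ne' (by simpa using hw), Real.log_exp]

lemma norm_f_le {γ : ℝ} (hγ : 1 < γ) {f : ℂ → ℂ}
    (hf : ∀ z ∈ Metric.ball (0:ℂ) 1,
      f z = ((1 - z) * (Complex.log ((Real.exp 1 : ℂ) / (1 - z))) ^ (γ : ℂ))⁻¹)
    {r θ : ℝ} (hr0 : 0 ≤ r) (hr1 : r < 1) :
    ‖f ((r:ℂ) * Complex.exp (θ * Complex.I))‖ ≤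
      (‖1 - (r:ℂ) * Complex.exp (θ * Complex.I)‖ *
        (1 - Real.log (‖1 - (r:ℂ) * Complex.exp (θ * Complex.I)‖)) ^ γ)⁻¹ := by
  set z := (r:ℂ) * Complex.exp (θ * Complex.I) with hz
  have hzball : z ∈ Metric.ball (0:ℂ) 1 := by
    rw [Metric.mem_ball, dist_zero_right, hz, abs_z_eq hr0]
    exact hr1
  rw [hf z hzball, norm_inv, norm_mul,
    Complex.norm_cpow_real]
  have hw1 : 1 - r ≤ ‖1 - z‖ := w_lower hr0
  have hw2 : ‖1 - z‖ ≤ 2 := w_upper hr0 hr1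
  have hw0 : 0 < ‖1 - z‖ := by linarith
  have hlog : Real.log (‖1 - z‖) ≤ Real.log 2 := Real.log_le_log hw0 hw2
  have h1w : 0 < 1 - Real.log (‖1 - z‖) := by linarith [log_two_lt_one]
  have hwne : (1 : ℂ) - z ≠ 0 := by
    intro h; rw [h] at hw0; simp at hw0
  have hL : 1 - Real.log (‖1 - z‖)
      ≤ ‖Complex.log ((Real.exp 1 : ℂ) / (1 - z))‖ := by
    rw [← log_re_val hwne]
    exact Complex.abs_re_le_norm _ |>.trans' (le_abs_self _)
  apply inv_anti₀
  · have := Real.rpow_pos_of_pos h1w γ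
    positivity
  · exact mul_le_mul_of_nonneg_left
      (Real.rpow_le_rpow h1w.le hL (by linarith)) hw0.le

lemma cont_norm_f {γ : ℝ} {f : ℂ → ℂ}
    (hf : ∀ z ∈ Metric.ball (0:ℂ) 1,
      f z = ((1 - z) * (Complex.log ((Real.exp 1 : ℂ) / (1 - z))) ^ (γ : ℂ))⁻¹)
    {r : ℝ} (hr0 : 0 ≤ r) (hr1 : r < 1) :
    Continuous (fun θ : ℝ => ‖f ((r:ℂ) * Complex.exp (θ * Complex.I))‖) := by
  have heq : (fun θ : ℝ => ‖f ((r:ℂ) * Complex.exp (θ * Complex.I))‖)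
      = fun θ : ℝ => ‖((1 - (r:ℂ) * Complex.exp (θ * Complex.I)) *
          (Complex.log ((Real.exp 1 : ℂ) / (1 - (r:ℂ) * Complex.exp (θ * Complex.I)))) ^ (γ : ℂ))⁻¹‖ := by
    funext θ
    rw [hf _ (by rw [Metric.mem_ball, dist_zero_right, abs_z_eq hr0]; exact hr1)]
  rw [heq]
  apply Continuous.norm
  rw [continuous_iff_continuousAt]
  intro θ
  have hwc : Continuous (fun θ : ℝ => 1 - (r:ℂ) * Complex.exp (θ * Complex.I)) := by
    apply continuous_const.sub
    exact continuous_const.mul (Complex.continuous_exp.comp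
      (Complex.continuous_ofReal.mul continuous_const))
  have hw1 : 1 - r ≤ ‖1 - (r:ℂ) * Complex.exp (θ * Complex.I)‖ := w_lower hr0
  have hw2 : ‖1 - (r:ℂ) * Complex.exp (θ * Complex.I)‖ ≤ 2 := w_upper hr0 hr1
  have hw0 : 0 < ‖1 - (r:ℂ) * Complex.exp (θ * Complex.I)‖ := by linarith
  have hwne : 1 - (r:ℂ) * Complex.exp (θ * Complex.I) ≠ 0 := by
    intro h; rw [h] at hw0; simp at hw0
  have hdivc : ContinuousAt
      (fun θ : ℝ => (Real.exp 1 : ℂ) / (1 - (r:ℂ) * Complex.exp (θ * Complex.I))) θ :=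
    continuousAt_const.div hwc.continuousAt hwne
  have hslit : (Real.exp 1 : ℂ) / (1 - (r:ℂ) * Complex.exp (θ * Complex.I))
      ∈ Complex.slitPlane := by
    rw [Complex.mem_slitPlane_iff]
    left
    rw [Complex.div_re]
    have hre : (1 - (r:ℂ) * Complex.exp (θ * Complex.I)).re = 1 - r * Real.cos θ := re_w
    have hrepos : 0 < (1 - (r:ℂ) * Complex.exp (θ * Complex.I)).re := by
      rw [hre]
      nlinarith [Real.cos_le_one θ, Real.neg_one_le_cos θ]
    have hnsq : 0 < Complex.normSq (1 - (r:ℂ) * Complex.exp (θ * Complex.I)) :=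
      Complex.normSq_pos.2 hwne
    have h1 : ((Real.exp 1 : ℝ) : ℂ).re = Real.exp 1 := Complex.ofReal_re _
    have h2 : ((Real.exp 1 : ℝ) : ℂ).im = 0 := Complex.ofReal_im _
    rw [h1, h2]
    have he := Real.exp_pos 1
    have h3 : 0 * (1 - (r:ℂ) * Complex.exp (θ * Complex.I)).im
        / Complex.normSq (1 - (r:ℂ) * Complex.exp (θ * Complex.I)) = 0 := by ring
    rw [h3, add_zero]
    positivity
  have hlogc : ContinuousAt (fun θ : ℝ =>
      Complex.log ((Real.exp 1 : ℂ) / (1 - (r:ℂ) * Complex.exp (θ * Complex.I)))) θ :=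
    ContinuousAt.comp (x := θ)
      (g := Complex.log)
      (f := fun θ : ℝ => (Real.exp 1 : ℂ) / (1 - (r:ℂ) * Complex.exp (θ * Complex.I)))
      (continuousAt_clog hslit) hdivc
  have hLre : (Complex.log ((Real.exp 1 : ℂ) / (1 - (r:ℂ) * Complex.exp (θ * Complex.I)))).re
      = 1 - Real.log (‖1 - (r:ℂ) * Complex.exp (θ * Complex.I)‖) := log_re_val hwne
  have hLpos : 0 < (Complex.log ((Real.exp 1 : ℂ) / (1 - (r:ℂ) * Complex.exp (θ * Complex.I)))).re := by
    rw [hLre]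
    have := Real.log_le_log hw0 hw2
    linarith [log_two_lt_one]
  have hLslit : Complex.log ((Real.exp 1 : ℂ) / (1 - (r:ℂ) * Complex.exp (θ * Complex.I)))
      ∈ Complex.slitPlane := Complex.mem_slitPlane_iff.2 (Or.inl hLpos)
  have hLne : Complex.log ((Real.exp 1 : ℂ) / (1 - (r:ℂ) * Complex.exp (θ * Complex.I))) ≠ 0 := by
    intro h; rw [h] at hLpos; simp at hLpos
  have hcpowc : ContinuousAt (fun θ : ℝ =>
      (Complex.log ((Real.exp 1 : ℂ) / (1 - (r:ℂ) * Complex.exp (θ * Complex.I)))) ^ (γ : ℂ)) θ :=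
    ContinuousAt.comp (x := θ)
      (g := fun w : ℂ => w ^ (γ : ℂ))
      (f := fun θ : ℝ => Complex.log ((Real.exp 1 : ℂ) / (1 - (r:ℂ) * Complex.exp (θ * Complex.I))))
      (continuousAt_cpow_const hLslit) hlogc
  apply ContinuousAt.inv₀ (hwc.continuousAt.mul hcpowc)
  apply mul_ne_zero hwne
  rw [Ne, Complex.cpow_eq_zero_iff]
  intro ⟨h1, _⟩
  exact hLne h1


/-- for `α > 0` and `γ ∈ (1, α+1)`, the function
`φ'(z) = 1/((1-z) log^γ(e/(1-z)))` belongs to the Hardy space `H¹`. -/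
theorem stmt16 (α γ : ℝ) (hα : 0 < α) (hγ1 : 1 < γ) (hγ2 : γ < α + 1)
    (f : ℂ → ℂ)
    (hf : ∀ z ∈ Metric.ball (0:ℂ) 1,
      f z = ((1 - z) * (Complex.log ((Real.exp 1 : ℂ) / (1 - z))) ^ (γ : ℂ))⁻¹) :
    ∃ M : ℝ, ∀ r : ℝ, 0 ≤ r → r < 1 →
      (1 / (2 * π)) * (∫ θ in (0:ℝ)..(2 * π),
        ‖f ((r : ℂ) * Complex.exp (θ * Complex.I))‖) ≤ M := by
  have hπ := Real.pi_pos
  have hπ3 := Real.pi_gt_three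
  have hl2 : 0 < Real.log 2 := Real.log_pos (by norm_num)
  have hl21 := log_two_lt_one
  set c : ℝ := γ + Real.log 2 with hc
  set B : ℝ := 1 + (γ + Real.log 2 - 1) / (1 - Real.log 2) with hB
  set K : ℝ := B ^ γ with hK
  have hB0 : 0 < B := by
    have : 0 ≤ (γ + Real.log 2 - 1) / (1 - Real.log 2) :=
      div_nonneg (by linarith) (by linarith)
    simp only [hB]; linarith
  have hK0 : 0 < K := Real.rpow_pos_of_pos hB0 γ
  refine ⟨2 * ((1 - Real.log 2) ^ γ)⁻¹ + K * (2 * (π * (γ - 1)⁻¹)), ?_⟩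
  intro r hr0 hr1
  set ε : ℝ := 1 - r with hε
  have hε0 : 0 < ε := by simp only [hε]; linarith
  have hε1 : ε ≤ 1 := by simp only [hε]; linarith
  have hεπ : ε ≤ π := by linarith
  have hord : ε ≤ 2 * π - ε := by linarith
  have hcont := cont_norm_f hf hr0 hr1
  set F : ℝ → ℝ := fun θ => ‖f ((r : ℂ) * Complex.exp (θ * Complex.I))‖ with hF
  -- pointwise bound pieces
  have hptlog : ∀ θ : ℝ, F θ ≤ (‖1 - (r:ℂ) * Complex.exp (θ * Complex.I)‖ *
      (1 - Real.log (‖1 - (r:ℂ) * Complex.exp (θ * Complex.I)‖)) ^ γ)⁻¹ :=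
    fun θ => norm_f_le hγ1 hf hr0 hr1
  -- endpoint bound
  have hend : ∀ θ : ℝ, F θ ≤ ε⁻¹ * ((1 - Real.log 2) ^ γ)⁻¹ := by
    intro θ
    refine le_trans (hptlog θ) ?_
    set aw := ‖1 - (r:ℂ) * Complex.exp (θ * Complex.I)‖ with haw
    have hw1 : ε ≤ aw := w_lower hr0
    have hw2 : aw ≤ 2 := w_upper hr0 hr1
    have hw0 : 0 < aw := lt_of_lt_of_le hε0 hw1
    have hlog : Real.log aw ≤ Real.log 2 := Real.log_le_log hw0 hw2
    have h1w : 0 < 1 - Real.log aw := by linarith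
    rw [← mul_inv]
    apply inv_anti₀
    · have := Real.rpow_pos_of_pos (show (0:ℝ) < 1 - Real.log 2 by linarith) γ
      positivity
    · exact mul_le_mul hw1 (Real.rpow_le_rpow (by linarith) (by linarith) (by linarith))
        (Real.rpow_nonneg (by linarith) γ) hw0.le
  -- middle bound
  have hmid : ∀ θ ∈ Set.Icc ε (2 * π - ε),
      F θ ≤ K * ((min θ (2 * π - θ) / π) * (c - Real.log (min θ (2 * π - θ) / π)) ^ γ)⁻¹ := by
    intro θ hθ
    have hθ0 : 0 ≤ θ := le_trans hε0.le hθ.1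
    have hθ2 : θ ≤ 2 * π := by linarith [hθ.2]
    set s : ℝ := min θ (2 * π - θ) / π with hs
    have hs0 : 0 < s := by
      apply div_pos _ hπ
      exact lt_min (lt_of_lt_of_le hε0 hθ.1) (lt_of_lt_of_le hε0 (by linarith [hθ.2]))
    have hs1 : s ≤ 1 := by
      rw [hs, div_le_one hπ]
      rcases le_total θ π with h | h
      · exact le_trans (min_le_left _ _) h
      · exact le_trans (min_le_right _ _) (by linarith)
    set aw := ‖1 - (r:ℂ) * Complex.exp (θ * Complex.I)‖ with haw
    have hsw : s ≤ aw := geo_bound hr0 hr1 hθ0 hθ2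
    have hw2 : aw ≤ 2 := w_upper hr0 hr1
    have hw0 : 0 < aw := lt_of_lt_of_le hs0 hsw
    refine le_trans (hptlog θ) (le_trans (compare_denoms hγ1 hw0 hw2) ?_)
    rw [← hc, ← hB, ← hK]
    apply mul_le_mul_of_nonneg_left _ hK0.le
    apply inv_anti₀
    · have hcs : 0 < c - Real.log s := by
        have := Real.log_nonpos hs0.le hs1
        simp only [hc]; linarith
      have := Real.rpow_pos_of_pos hcs γ
      positivity
    · exact denom_mono hγ1 hs0 hsw hw2
  -- integrability facts
  have hFi : ∀ a b : ℝ, IntervalIntegrable F MeasureTheory.volume a b :=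
    fun a b => hcont.intervalIntegrable a b
  have hgmc : ContinuousOn
      (fun θ : ℝ => K * ((min θ (2 * π - θ) / π) * (c - Real.log (min θ (2 * π - θ) / π)) ^ γ)⁻¹)
      (Set.Icc ε (2 * π - ε)) := by
    intro θ hθ
    have hs0 : 0 < min θ (2 * π - θ) / π := by
      apply div_pos _ hπ
      exact lt_min (lt_of_lt_of_le hε0 hθ.1) (lt_of_lt_of_le hε0 (by linarith [hθ.2]))
    have hs1 : min θ (2 * π - θ) / π ≤ 1 := by
      rw [div_le_one hπ]
      rcases le_total θ π with h | h
      · exact le_trans (min_le_left _ _) h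
      · exact le_trans (min_le_right _ _) (by linarith)
    have hcs : 0 < c - Real.log (min θ (2 * π - θ) / π) := by
      have := Real.log_nonpos hs0.le hs1
      simp only [hc]; linarith
    have hminc : ContinuousAt (fun θ : ℝ => min θ (2 * π - θ) / π) θ :=
      (continuousAt_id.min (continuousAt_const.sub continuousAt_id)).div_const π
    have hGc := G_continuousAt (γ := γ) hs0 hcs
    exact (continuousAt_const.mul (ContinuousAt.comp (x := θ)
      (g := fun s : ℝ => (s * (c - Real.log s) ^ γ)⁻¹)
      (f := fun θ : ℝ => min θ (2 * π - θ) / π) hGc hminc)).continuousWithinAt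
  set gm : ℝ → ℝ := fun θ =>
    K * ((min θ (2 * π - θ) / π) * (c - Real.log (min θ (2 * π - θ) / π)) ^ γ)⁻¹ with hgm
  have hππε : π ≤ 2 * π - ε := by linarith
  have hgmint : IntervalIntegrable gm MeasureTheory.volume ε (2 * π - ε) := by
    apply ContinuousOn.intervalIntegrable
    rw [Set.uIcc_of_le hord]; exact hgmc
  have hgmint1 : IntervalIntegrable gm MeasureTheory.volume ε π := by
    apply ContinuousOn.intervalIntegrable
    rw [Set.uIcc_of_le hεπ]
    exact hgmc.mono (Set.Icc_subset_Icc le_rfl hππε)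
  have hgmint2 : IntervalIntegrable gm MeasureTheory.volume π (2 * π - ε) := by
    apply ContinuousOn.intervalIntegrable
    rw [Set.uIcc_of_le hππε]
    exact hgmc.mono (Set.Icc_subset_Icc hεπ le_rfl)
  -- endpoint integrals
  have hA : ∫ θ in (0:ℝ)..ε, F θ ≤ ((1 - Real.log 2) ^ γ)⁻¹ := by
    have h := intervalIntegral.integral_mono_on hε0.le (hFi 0 ε)
      intervalIntegrable_const (fun x _ => hend x)
    rw [intervalIntegral.integral_const, smul_eq_mul, sub_zero] at h
    calc ∫ θ in (0:ℝ)..ε, F θ ≤ ε * (ε⁻¹ * ((1 - Real.log 2) ^ γ)⁻¹) := h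
      _ = ((1 - Real.log 2) ^ γ)⁻¹ := mul_inv_cancel_left₀ hε0.ne' _
  have hC : ∫ θ in (2 * π - ε)..(2 * π), F θ ≤ ((1 - Real.log 2) ^ γ)⁻¹ := by
    have h := intervalIntegral.integral_mono_on (by linarith : 2 * π - ε ≤ 2 * π)
      (hFi (2 * π - ε) (2 * π)) intervalIntegrable_const (fun x _ => hend x)
    rw [intervalIntegral.integral_const, smul_eq_mul,
      show 2 * π - (2 * π - ε) = ε by ring] at h
    calc ∫ θ in (2 * π - ε)..(2 * π), F θ ≤ ε * (ε⁻¹ * ((1 - Real.log 2) ^ γ)⁻¹) := h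
      _ = ((1 - Real.log 2) ^ γ)⁻¹ := mul_inv_cancel_left₀ hε0.ne' _
  -- middle
  have hBmid : ∫ θ in ε..(2 * π - ε), F θ ≤ ∫ θ in ε..(2 * π - ε), gm θ :=
    intervalIntegral.integral_mono_on hord (hFi ε (2 * π - ε)) hgmint hmid
  have hsplitmid := intervalIntegral.integral_add_adjacent_intervals hgmint1 hgmint2
  have heq1 : ∫ θ in ε..π, gm θ
      = K * ∫ θ in ε..π, ((θ / π) * (c - Real.log (θ / π)) ^ γ)⁻¹ := by
    rw [← intervalIntegral.integral_const_mul]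
    apply intervalIntegral.integral_congr
    intro θ hθ
    rw [Set.uIcc_of_le hεπ] at hθ
    have hminθ : min θ (2 * π - θ) = θ := min_eq_left (by linarith [hθ.1, hθ.2])
    simp only [hgm, hminθ]
  have heq2 : ∫ θ in π..(2 * π - ε), gm θ
      = K * ∫ θ in ε..π, ((θ / π) * (c - Real.log (θ / π)) ^ γ)⁻¹ := by
    have hcongr : ∫ θ in π..(2 * π - ε), gm θ = ∫ θ in π..(2 * π - ε),
        (fun x => K * ((x / π) * (c - Real.log (x / π)) ^ γ)⁻¹) (2 * π - θ) := by
      apply intervalIntegral.integral_congr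
      intro θ hθ
      rw [Set.uIcc_of_le hππε] at hθ
      have hminθ : min θ (2 * π - θ) = 2 * π - θ := min_eq_right (by linarith [hθ.1])
      simp only [hgm, hminθ]
    rw [hcongr, intervalIntegral.integral_comp_sub_left
      (fun x => K * ((x / π) * (c - Real.log (x / π)) ^ γ)⁻¹) (2 * π),
      show 2 * π - (2 * π - ε) = ε by ring, show 2 * π - π = π by ring,
      intervalIntegral.integral_const_mul]
  have hkey := key_integral hγ1 hε0 hεπ
  rw [← hc] at hkey
  have hmidtot : ∫ θ in ε..(2 * π - ε), gm θ ≤ K * (2 * (π * (γ - 1)⁻¹)) := by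
    rw [← hsplitmid, heq1, heq2]
    have h1 : K * ∫ θ in ε..π, ((θ / π) * (c - Real.log (θ / π)) ^ γ)⁻¹
        ≤ K * (π * (γ - 1)⁻¹) := mul_le_mul_of_nonneg_left hkey hK0.le
    linarith
  -- combine
  have hsplit2 := intervalIntegral.integral_add_adjacent_intervals
    (hFi ε (2 * π - ε)) (hFi (2 * π - ε) (2 * π))
  have hsplit1 := intervalIntegral.integral_add_adjacent_intervals (hFi 0 ε) (hFi ε (2 * π))
  have htot : ∫ θ in (0:ℝ)..(2 * π), F θ
      ≤ 2 * ((1 - Real.log 2) ^ γ)⁻¹ + K * (2 * (π * (γ - 1)⁻¹)) := by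
    rw [← hsplit1, ← hsplit2]
    linarith
  have hnn : 0 ≤ ∫ θ in (0:ℝ)..(2 * π), F θ :=
    intervalIntegral.integral_nonneg (by linarith) (fun x _ => norm_nonneg _)
  calc (1 / (2 * π)) * (∫ θ in (0:ℝ)..(2 * π), F θ)
      ≤ 1 * (∫ θ in (0:ℝ)..(2 * π), F θ) := by
        apply mul_le_mul_of_nonneg_right _ hnn
        rw [div_le_one (by linarith)]
        linarith
    _ = ∫ θ in (0:ℝ)..(2 * π), F θ := one_mul _
    _ ≤ _ := htot
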